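/- Let G be a maximal plane graph with n vertices containing a sequence of k nested separating triangles t₁ ≻ t₂ ≻ ... ≻ t_k. Then the union of the vertex sets of t₁, ..., t_k contains at least k + 2 distinct vertices. -/

import Mathlib

open Set

/-- If the convex hull of three points in the plane has nonempty interior, they form an
affine basis. -/
lemma stmt14_triBasis {p : Fin 3 → ℝ × ℝ}
    (hne : (interior (convexHull ℝ (Set.range p))).Nonempty) :
    ∃ b : AffineBasis (Fin 3) ℝ (ℝ × ℝ), ⇑b = p := by
  have htop : affineSpan ℝ (Set.range p) = ⊤ := affineSpan_eq_top_of_nonempty_interior hne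
  have hind : AffineIndependent ℝ p := by
    rw [affineIndependent_iff_not_collinear]
    intro hcol
    have h1 : Module.finrank ℝ (vectorSpan ℝ (Set.range p)) ≤ 1 :=
      collinear_iff_finrank_le_one.mp hcol
    have h2 : vectorSpan ℝ (Set.range p) = ⊤ :=
      AffineSubspace.vectorSpan_eq_top_of_affineSpan_eq_top ℝ (ℝ × ℝ) (ℝ × ℝ) htop
    rw [h2, finrank_top] at h1
    simp [Module.finrank_prod] at h1
  exact ⟨⟨p, hind, htop⟩, rfl⟩

/-- A vertex of a nondegenerate triangle is not in the interior of its hull. -/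
lemma stmt14_notInterior {p : Fin 3 → ℝ × ℝ}
    (hne : (interior (convexHull ℝ (Set.range p))).Nonempty) (j : Fin 3) :
    p j ∉ interior (convexHull ℝ (Set.range p)) := by
  classical
  obtain ⟨b, hb⟩ := stmt14_triBasis hne
  rw [← hb, b.interior_convexHull]
  intro hmem
  obtain ⟨i, hij⟩ : ∃ i : Fin 3, i ≠ j := by
    rcases Decidable.eq_or_ne j 0 with rfl | h
    · exact ⟨1, by decide⟩
    · exact ⟨0, Ne.symm h⟩
  have h0 : (0:ℝ) < if i = j then 1 else 0 := by
    rw [← b.coord_apply]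
    have := hmem i
    rwa [hb] at this ⊢
  simp [hij] at h0

/-- A point of the hull not in the interior lies on an edge of the triangle. -/
lemma stmt14_frontierSeg {p : Fin 3 → ℝ × ℝ}
    (hne : (interior (convexHull ℝ (Set.range p))).Nonempty) {x : ℝ × ℝ}
    (hx : x ∈ convexHull ℝ (Set.range p))
    (hx' : x ∉ interior (convexHull ℝ (Set.range p))) :
    ∃ a c : Fin 3, a ≠ c ∧ x ∈ segment ℝ (p a) (p c) := by
  classical
  obtain ⟨b, hb⟩ := stmt14_triBasis hne
  rw [← hb] at hx hx'
  have hnn : ∀ i, 0 ≤ b.coord i x := by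
    rw [b.convexHull_eq_nonneg_coord] at hx; exact hx
  obtain ⟨j, hj⟩ : ∃ j, ¬ 0 < b.coord j x := by
    by_contra h
    push_neg at h
    exact hx' (by rw [b.interior_convexHull]; exact h)
  have hj0 : b.coord j x = 0 := le_antisymm (not_lt.mp hj) (hnn j)
  have hsum : ∑ i, b.coord i x = 1 := b.sum_coord_apply_eq_one x
  have hxeq : ∑ i, b.coord i x • p i = x := by
    have h := b.affineCombination_coord_eq_self x
    rwa [Finset.affineCombination_eq_linear_combination _ _ _ hsum, hb] at h
  rw [Fin.sum_univ_three] at hsum hxeq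
  have hcase : j = 0 ∨ j = 1 ∨ j = 2 := by fin_cases j <;> simp
  rcases hcase with rfl | rfl | rfl
  · refine ⟨1, 2, by decide, b.coord 1 x, b.coord 2 x, hnn 1, hnn 2, by linarith, ?_⟩
    rw [hj0] at hxeq; simpa using hxeq
  · refine ⟨0, 2, by decide, b.coord 0 x, b.coord 2 x, hnn 0, hnn 2, by linarith, ?_⟩
    rw [hj0] at hxeq; simpa using hxeq
  · refine ⟨0, 1, by decide, b.coord 0 x, b.coord 1 x, hnn 0, hnn 1, by linarith, ?_⟩
    rw [hj0] at hxeq; simpa using hxeq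

/-- A segment from an interior point to an exterior point meets the boundary. -/
lemma stmt14_cross {s : Set (ℝ × ℝ)} (hfin : s.Finite) {x y : ℝ × ℝ}
    (hx : x ∈ interior (convexHull ℝ s)) (hy : y ∉ convexHull ℝ s) :
    ∃ q ∈ segment ℝ x y, q ∈ convexHull ℝ s ∧ q ∉ interior (convexHull ℝ s) := by
  by_contra hcon
  push_neg at hcon
  have hclosed : IsClosed (convexHull ℝ s) := (hfin.isCompact_convexHull (𝕜 := ℝ)).isClosed
  have hsub : segment ℝ x y ⊆ interior (convexHull ℝ s) ∪ (convexHull ℝ s)ᶜ := by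
    intro q hq
    by_cases hqH : q ∈ convexHull ℝ s
    · exact Or.inl (hcon q hq hqH)
    · exact Or.inr hqH
  obtain ⟨q, hq, hqi, hqc⟩ := (convex_segment x y).isPreconnected _ _ isOpen_interior
    hclosed.isOpen_compl hsub ⟨x, left_mem_segment ℝ x y, hx⟩
    ⟨y, right_mem_segment ℝ x y, hy⟩
  exact hqc (interior_subset hqi)

theorem stmt14 (V : Type) [Fintype V] (G : SimpleGraph V) (pos : V → ℝ × ℝ)
    (hinj : Function.Injective pos)
    (hnc : ∀ a b c d : V, G.Adj a b → G.Adj c d → ({a, b} : Set V) ≠ {c, d} →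
      segment ℝ (pos a) (pos b) ∩ segment ℝ (pos c) (pos d) ⊆
        pos '' (({a, b} : Set V) ∩ {c, d}))
    (hvert : ∀ a b v : V, G.Adj a b → pos v ∈ segment ℝ (pos a) (pos b) →
      v = a ∨ v = b)
    (hmax : G.edgeSet.ncard = 3 * Fintype.card V - 6)
    (k : ℕ) (hk : 1 ≤ k) (t : Fin k → Fin 3 → V)
    (htri : ∀ i, Function.Injective (t i) ∧
      ∀ j j' : Fin 3, j ≠ j' → G.Adj (t i j) (t i j'))
    (hsep : ∀ i, ¬ (G.induce {v : V | v ∉ Set.range (t i)}).Preconnected)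
    (hnest : ∀ (i : Fin k) (h : i.val + 1 < k), ∃ j : Fin 3,
      pos (t ⟨i.val + 1, h⟩ j) ∈
        interior (convexHull ℝ (Set.range (fun j' => pos (t i j'))))) :
    k + 2 ≤ (⋃ i, Set.range (t i)).ncard := by
  classical
  -- abbreviation for the triangles' hulls
  let H : ∀ n : ℕ, n < k → Set (ℝ × ℝ) := fun n hn =>
    convexHull ℝ (Set.range fun j => pos (t ⟨n, hn⟩ j))
  have hnest' : ∀ (n : ℕ) (h : n + 1 < k), ∃ j : Fin 3,
      pos (t ⟨n + 1, h⟩ j) ∈ interior (H n (by omega)) :=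
    fun n h => hnest ⟨n, by omega⟩ h
  -- the key geometric step: all vertices of t (n+1) lie in the hull of t n
  have hstep : ∀ (n : ℕ) (h1 : n + 1 < k) (h : n < k), H (n + 1) h1 ⊆ H n h := by
    intro n h1 h
    obtain ⟨j₀, hj₀⟩ := hnest' n h1
    apply convexHull_min _ (convex_convexHull ℝ _)
    rintro _ ⟨j, rfl⟩
    show pos (t ⟨n + 1, h1⟩ j) ∈ H n h
    by_contra hy
    have hneI : (interior (convexHull ℝ
        (Set.range fun j' => pos (t ⟨n, h⟩ j')))).Nonempty := ⟨_, hj₀⟩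
    obtain ⟨q, hqseg, hqH, hqint⟩ := stmt14_cross (Set.finite_range _) hj₀ hy
    obtain ⟨a, c, hac, hqac⟩ := stmt14_frontierSeg hneI hqH hqint
    have hjj₀ : j ≠ j₀ := by
      rintro rfl
      exact hy (interior_subset hj₀)
    have hadj1 : G.Adj (t ⟨n + 1, h1⟩ j₀) (t ⟨n + 1, h1⟩ j) :=
      (htri _).2 _ _ (Ne.symm hjj₀)
    have hadj2 : G.Adj (t ⟨n, h⟩ a) (t ⟨n, h⟩ c) := (htri _).2 _ _ hac
    have hsetne : ({t ⟨n + 1, h1⟩ j₀, t ⟨n + 1, h1⟩ j} : Set V) ≠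
        {t ⟨n, h⟩ a, t ⟨n, h⟩ c} := by
      intro hEq
      have hmem : t ⟨n + 1, h1⟩ j₀ ∈ ({t ⟨n, h⟩ a, t ⟨n, h⟩ c} : Set V) := by
        rw [← hEq]; exact Or.inl rfl
      rcases hmem with h' | h'
      · exact stmt14_notInterior hneI a (by rw [← h']; exact hj₀)
      · rw [Set.mem_singleton_iff] at h'
        exact stmt14_notInterior hneI c (by rw [← h']; exact hj₀)
    have hq' := hnc _ _ _ _ hadj1 hadj2 hsetne ⟨hqseg, hqac⟩
    obtain ⟨u, ⟨hu1, hu2⟩, huq⟩ := hq'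
    rcases hu1 with rfl | rfl
    · exact hqint (huq ▸ hj₀)
    · refine hy ?_
      rw [huq]
      have hma : pos (t ⟨n, h⟩ a) ∈ H n h :=
        subset_convexHull ℝ _ (Set.mem_range_self a)
      have hmc : pos (t ⟨n, h⟩ c) ∈ H n h :=
        subset_convexHull ℝ _ (Set.mem_range_self c)
      exact (convex_convexHull ℝ _).segment_subset hma hmc hqac
  -- the chain of inclusions
  have hchain : ∀ (m : ℕ) (hm : m < k) (n : ℕ) (hn : n ≤ m), H m hm ⊆ H n (by omega) := by
    intro m
    induction m with
    | zero =>
      intro hm n hn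
      have : n = 0 := by omega
      subst this
      exact subset_rfl
    | succ m ih =>
      intro hm n hn
      rcases Nat.lt_or_ge n (m + 1) with h' | h'
      · exact (hstep m hm (by omega)).trans (ih (by omega) n (by omega))
      · have : n = m + 1 := by omega
        subst this
        exact subset_rfl
  have hintchain : ∀ (m : ℕ) (hm : m < k) (n : ℕ) (hn : n ≤ m),
      interior (H m hm) ⊆ interior (H n (by omega)) :=
    fun m hm n hn => interior_mono (hchain m hm n hn)
  -- chosen interior vertices
  let w : ∀ n : ℕ, n + 1 < k → V := fun n h => t ⟨n + 1, h⟩ (Classical.choose (hnest' n h))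
  have hw : ∀ (n : ℕ) (h : n + 1 < k), pos (w n h) ∈ interior (H n (by omega)) :=
    fun n h => Classical.choose_spec (hnest' n h)
  -- the injection
  let f : ℕ → V := fun m =>
    if h3 : m < 3 then t ⟨0, by omega⟩ ⟨m, h3⟩
    else if h2 : (m - 3) + 1 < k then w (m - 3) h2
    else t ⟨0, by omega⟩ 0
  have hfval : ∀ (m : ℕ) (h3 : 3 ≤ m) (hm : m < k + 2), f m = w (m - 3) (by omega) := by
    intro m h3 hm
    have h3' : ¬ m < 3 := by omega
    have h2 : (m - 3) + 1 < k := by omega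
    simp only [f, dif_neg h3', dif_pos h2]
  -- vertices of a triangle are not interior points of later hulls
  have hwi : ∀ (m : ℕ) (h3 : 3 ≤ m) (hm : m < k + 2),
      pos (f m) ∈ interior (H (m - 3) (by omega)) := by
    intro m h3 hm
    rw [hfval m h3 hm]
    exact hw (m - 3) (by omega)
  -- injectivity
  have hfinj : ∀ m m', m < k + 2 → m' < k + 2 → f m = f m' → m = m' := by
    have key : ∀ m m', m < m' → m' < k + 2 → f m ≠ f m' := by
      intro m m' hmm' hm' hEq
      have hm : m < k + 2 := by omega
      by_cases h3 : m' < 3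
      · -- both < 3 : injectivity of t 0
        have h3m : m < 3 := by omega
        have := (htri ⟨0, by omega⟩).1 (show t ⟨0, by omega⟩ ⟨m, h3m⟩ = t ⟨0, by omega⟩ ⟨m', h3⟩ by
          simpa only [f, dif_pos h3m, dif_pos h3] using hEq)
        have : m = m' := by simpa [Fin.ext_iff] using this
        omega
      · have hm'3 : 3 ≤ m' := by omega
        have hint' : pos (f m') ∈ interior (H (m' - 3) (by omega)) := hwi m' hm'3 hm'
        by_cases h3m : m < 3
        · -- f m is a vertex of t 0, f m' is interior to H 0
          have hint0 : pos (f m') ∈ interior (H 0 (by omega)) :=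
            hintchain (m' - 3) (by omega) 0 (by omega) hint'
          have hne0 : (interior (H 0 (by omega : (0:ℕ) < k))).Nonempty := ⟨_, hint0⟩
          have : pos (f m) ∉ interior (H 0 (by omega)) := by
            simp only [f, dif_pos h3m]
            exact stmt14_notInterior hne0 ⟨m, h3m⟩
          rw [hEq] at this
          exact this hint0
        · -- both are interior vertices
          have h3m' : 3 ≤ m := by omega
          have hmlt : m - 3 + 1 ≤ m' - 3 := by omega
          have hint'' : pos (f m') ∈ interior (H (m - 3 + 1) (by omega)) :=
            hintchain (m' - 3) (by omega) (m - 3 + 1) hmlt hint'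
          have hne1 : (interior (H (m - 3 + 1) (by omega : m - 3 + 1 < k))).Nonempty :=
            ⟨_, hint''⟩
          have : pos (f m) ∉ interior (H (m - 3 + 1) (by omega)) := by
            rw [hfval m h3m' hm]
            exact stmt14_notInterior hne1 (Classical.choose (hnest' (m - 3) (by omega)))
          rw [hEq] at this
          exact this hint''
    intro m m' hm hm' hEq
    rcases Nat.lt_trichotomy m m' with h | h | h
    · exact absurd hEq (key m m' h hm')
    · exact h
    · exact absurd hEq.symm (key m' m h hm)
  -- f lands in the union
  have hfrange : ∀ m, m < k + 2 → f m ∈ ⋃ i, Set.range (t i) := by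
    intro m hm
    by_cases h3 : m < 3
    · exact Set.mem_iUnion.2 ⟨⟨0, by omega⟩, by simp only [f, dif_pos h3]; exact ⟨_, rfl⟩⟩
    · rw [hfval m (by omega) hm]
      exact Set.mem_iUnion.2 ⟨⟨m - 3 + 1, by omega⟩, ⟨_, rfl⟩⟩
  -- conclude by counting
  let F : Fin (k + 2) → V := fun m => f m
  have hFinj : Function.Injective F := by
    intro a b hab
    exact Fin.ext (hfinj a b a.isLt b.isLt hab)
  have hsub : Set.range F ⊆ ⋃ i, Set.range (t i) := by
    rintro _ ⟨m, rfl⟩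
    exact hfrange m m.isLt
  calc k + 2 = (Set.range F).ncard := by
        rw [← Set.image_univ, Set.ncard_image_of_injective _ hFinj, Set.ncard_univ,
          Nat.card_eq_fintype_card, Fintype.card_fin]
    _ ≤ (⋃ i, Set.range (t i)).ncard := Set.ncard_le_ncard hsub (Set.toFinite _)
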